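/- If x ∈ Q ∩ I_α is written as s/t in lowest terms with 0 < s < t and T_α(x) ≠ 1, then T_α(x), written in lowest terms as s'/t', has denominator t' strictly smaller than t (the denominator strictly decreases under T_α until the orbit reaches 1). -/

import Mathlib

open Set MeasureTheory Filter Topology
open scoped Classical

/-- The Gauss map `G(x) = 1/x - ⌊1/x⌋`. -/
noncomputable def gauss (x : ℝ) : ℝ := Int.fract (1 / x)

/-- The flipped region `D_α = ⋃_{n ≥ 1} [1/(n+α), 1/n]`. -/
def Dset (α : ℝ) : Set ℝ := ⋃ n : ℕ, Set.Icc (1 / ((n : ℝ) + 1 + α)) (1 / ((n : ℝ) + 1))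

/-- The flipped α-continued fraction map `T_α`. -/
noncomputable def T (α x : ℝ) : ℝ := if x ∈ Dset α then 1 - gauss x else gauss x

/-- the denominator of a rational in `I_α` strictly decreases
under `T_α` as long as the orbit has not reached `1`. -/
theorem stmt_3 (α : ℝ) (hα : α ∈ Set.Ioo (0:ℝ) 1) (q : ℚ)
    (hq : (q : ℝ) ∈ Set.Icc (min α (1 - α)) 1) (h0 : 0 < q) (h1 : q < 1)
    (hne : T α (q : ℝ) ≠ 1) :
    ∃ q' : ℚ, (q' : ℝ) = T α (q : ℝ) ∧ q'.den < q.den := by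
  have hnum_pos : 0 < q.num := Rat.num_pos.mpr h0
  set r : ℚ := Int.fract q⁻¹ with hr
  have hcast : ((r : ℚ) : ℝ) = gauss (q:ℝ) := by
    rw [hr, Rat.cast_fract, gauss, one_div, Rat.cast_inv]
  have hden_inv : (q⁻¹.den : ℤ) = q.num := by
    rw [Rat.inv_def, Rat.divInt_eq_div]
    have hcop : (q.den : ℤ).natAbs.Coprime q.num.natAbs := by
      simpa using q.reduced.symm
    have := Rat.den_div_eq_of_coprime hnum_pos hcop
    simpa using this
  have hdvd : r.den ∣ q⁻¹.den := by
    have h1 : r = q⁻¹ + (-(⌊q⁻¹⌋ : ℚ)) := by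
      rw [hr, Int.fract]; ring
    have := Rat.add_den_dvd q⁻¹ (-(⌊q⁻¹⌋ : ℚ))
    rw [← h1] at this
    simpa using this
  have hntlt : q.num.natAbs < q.den := by
    have hlt : q.num < (q.den : ℤ) := by
      have h1' := h1
      rw [← Rat.num_div_den q, div_lt_one (by exact_mod_cast q.pos)] at h1'
      exact_mod_cast h1'
    omega
  have hrden : r.den < q.den := by
    have h2 : q⁻¹.den = q.num.natAbs := by omega
    calc r.den ≤ q⁻¹.den := Nat.le_of_dvd q⁻¹.pos hdvd
      _ < q.den := by omega
  by_cases hD : (q : ℝ) ∈ Dset α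
  · refine ⟨1 - r, ?_, ?_⟩
    · rw [T, if_pos hD]; push_cast [hcast]; ring
    · have : (1 - r).den ∣ r.den := by
        have := Rat.add_den_dvd (1 : ℚ) (-r)
        simpa [sub_eq_add_neg] using this
      exact lt_of_le_of_lt (Nat.le_of_dvd r.pos this) hrden
  · exact ⟨r, by rw [T, if_neg hD]; exact hcast, hrden⟩
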